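/- Let s be a quaternion with |q| < |s| for a quaternion q. Then the series ∑_{n=0}^∞ qⁿ s^{-1-n} converges and its sum equals -(q² - 2·Re(s)·q + |s|²)⁻¹ · (q - conj(s)). -/

import Mathlib

open scoped Quaternion
open Filter Finset Topology

theorem cauchy_kernel_series (q s : ℍ[ℝ]) (h : ‖q‖ < ‖s‖) :
    HasSum (fun n : ℕ => q ^ n * (s⁻¹) ^ (n + 1))
      (-(q ^ 2 - 2 * (s.re : ℍ[ℝ]) * q + ((‖s‖ ^ 2 : ℝ) : ℍ[ℝ]))⁻¹ * (q - star s)) := by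
  have hs0 : (0:ℝ) < ‖s‖ := lt_of_le_of_lt (norm_nonneg q) h
  have hs : s ≠ 0 := norm_pos_iff.mp hs0
  set u : ℍ[ℝ] := s⁻¹ with hu
  set P : ℍ[ℝ] := q ^ 2 - 2 * (s.re : ℍ[ℝ]) * q + ((‖s‖ ^ 2 : ℝ) : ℍ[ℝ]) with hPdef
  have hnormSq : (‖s‖^2:ℝ) = Quaternion.normSq s := by
    rw [Quaternion.normSq_eq_norm_mul_self, sq]
  have hss : ((‖s‖^2 : ℝ) : ℍ[ℝ]) = star s * s := by
    rw [hnormSq, ← Quaternion.star_mul_self]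
  have hsu : s * u = 1 := mul_inv_cancel₀ hs
  have two_coe : ((2:ℝ):ℍ[ℝ]) = 2 := by norm_cast
  -- P ≠ 0
  have hP : P ≠ 0 := by
    intro hP0
    have hchar : q ^ 2 - 2 * (q.re : ℍ[ℝ]) * q + ((‖q‖ ^ 2 : ℝ) : ℍ[ℝ]) = 0 := by
      have h1 : ((‖q‖^2 : ℝ) : ℍ[ℝ]) = q * star q := by
        rw [show (‖q‖^2:ℝ) = Quaternion.normSq q by
          rw [Quaternion.normSq_eq_norm_mul_self, sq], ← Quaternion.self_mul_star]
      have h2 : 2 * (q.re : ℍ[ℝ]) * q = q * (q + star q) := by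
        rw [Quaternion.self_add_star]
        have c := Quaternion.coe_commutes (2 * q.re) q
        push_cast at c
        rw [two_coe] at c
        rw [c]
      rw [h1, h2, sq]
      noncomm_ring
    have hsub : ((2 * (s.re - q.re) : ℝ) : ℍ[ℝ]) * q = ((‖s‖^2 - ‖q‖^2 : ℝ) : ℍ[ℝ]) := by
      have t : (q ^ 2 - 2 * (s.re : ℍ[ℝ]) * q + ((‖s‖ ^ 2 : ℝ) : ℍ[ℝ]))
          - (q ^ 2 - 2 * (q.re : ℍ[ℝ]) * q + ((‖q‖ ^ 2 : ℝ) : ℍ[ℝ])) = 0 := by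
        rw [← hPdef, hP0, hchar, sub_zero]
      rw [← sub_eq_zero]
      have e : ((2 * (s.re - q.re) : ℝ) : ℍ[ℝ]) * q - ((‖s‖^2 - ‖q‖^2 : ℝ) : ℍ[ℝ])
          = -((q ^ 2 - 2 * (s.re : ℍ[ℝ]) * q + ((‖s‖ ^ 2 : ℝ) : ℍ[ℝ]))
          - (q ^ 2 - 2 * (q.re : ℍ[ℝ]) * q + ((‖q‖ ^ 2 : ℝ) : ℍ[ℝ]))) := by
        push_cast
        simp only [two_coe]
        noncomm_ring
      rw [e, t, neg_zero]
    by_cases hre : s.re = q.re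
    · have t0 : ((‖s‖^2 - ‖q‖^2 : ℝ) : ℍ[ℝ]) = 0 := by
        rw [← hsub, hre]; simp
      have t1 : (‖s‖^2 - ‖q‖^2 : ℝ) = 0 :=
        Quaternion.coe_injective (by rw [t0]; norm_num)
      nlinarith [norm_nonneg q, norm_nonneg s]
    · have hc : (2 * (s.re - q.re) : ℝ) ≠ 0 := by
        intro hc0
        rcases mul_eq_zero.mp hc0 with h' | h'
        · norm_num at h'
        · exact hre (by linarith)
      have hc' : ((2 * (s.re - q.re) : ℝ) : ℍ[ℝ]) ≠ 0 := by
        intro h'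
        exact hc (Quaternion.coe_injective (by rw [h']; norm_num))
      set r : ℝ := (‖s‖^2 - ‖q‖^2) / (2 * (s.re - q.re)) with hr
      have hq : q = (r : ℍ[ℝ]) := by
        have e : q = ((2 * (s.re - q.re) : ℝ) : ℍ[ℝ])⁻¹ * ((‖s‖^2 - ‖q‖^2 : ℝ) : ℍ[ℝ]) := by
          rw [← hsub, ← mul_assoc, inv_mul_cancel₀ hc', one_mul]
        rw [e, ← Quaternion.coe_inv, ← Quaternion.coe_mul, hr, div_eq_inv_mul]
      have hreal : r^2 - 2 * s.re * r + ‖s‖^2 = 0 := by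
        apply Quaternion.coe_injective
        rw [Quaternion.coe_zero, ← hP0, hPdef, hq]
        push_cast
        simp only [two_coe]
      have hre2 : s.re ^ 2 ≤ ‖s‖ ^ 2 := by
        rw [hnormSq, Quaternion.normSq_def']
        nlinarith [sq_nonneg s.imI, sq_nonneg s.imJ, sq_nonneg s.imK]
      have hqn : ‖q‖ = |r| := by rw [hq, Quaternion.norm_coe, Real.norm_eq_abs]
      have hlt : r^2 < ‖s‖^2 := by
        rw [← sq_abs, ← hqn]
        nlinarith [norm_nonneg q]
      nlinarith [sq_nonneg (r - s.re)]
  -- summability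
  have hnu : ‖u‖ = ‖s‖⁻¹ := norm_inv s
  have hr0 : 0 ≤ ‖q‖ * ‖u‖ := by positivity
  have hr1 : ‖q‖ * ‖u‖ < 1 := by
    rw [hnu, ← div_eq_mul_inv, div_lt_one hs0]; exact h
  have hsummable : Summable (fun n : ℕ => q ^ n * u ^ (n + 1)) := by
    apply Summable.of_norm_bounded (g := fun n => ‖u‖ * (‖q‖ * ‖u‖) ^ n)
      ((summable_geometric_of_lt_one hr0 hr1).mul_left _)
    intro n
    rw [norm_mul, norm_pow, norm_pow, mul_pow, pow_succ]
    apply le_of_eq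
    ring
  set T := ∑' n : ℕ, q ^ n * u ^ (n + 1) with hT
  have hsum : HasSum (fun n : ℕ => q ^ n * u ^ (n + 1)) T := hsummable.hasSum
  -- telescoping
  set g : ℕ → ℍ[ℝ] := fun n => q ^ (n+1) * u ^ n - q ^ n * star s * u ^ n with hg
  have key : ∀ n : ℕ, P * (q ^ n * u ^ (n+1)) = g (n+1) - g n := by
    intro n
    have t1 : q^2 * (q ^ n * u ^ (n+1)) = q ^ (n+2) * u ^ (n+1) := by
      rw [← mul_assoc, ← pow_add, Nat.add_comm]
    have e1 : (2 * (s.re : ℍ[ℝ]) * q) * (q ^ n * u ^ (n+1))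
        = q ^ (n+1) * u ^ n + q ^ (n+1) * star s * u ^ (n+1) := by
      have c1 : (2 * (s.re : ℍ[ℝ]) * q) * (q ^ n * u ^ (n+1))
          = q ^ (n+1) * ((s + star s) * u ^ (n+1)) := by
        rw [Quaternion.self_add_star]
        have c2 := Quaternion.coe_commutes (2 * s.re) (q ^ (n+1))
        push_cast at c2
        rw [two_coe] at c2
        rw [mul_assoc, ← mul_assoc q, ← pow_succ', ← mul_assoc, c2, mul_assoc]
      rw [c1, add_mul, pow_succ' u n, ← mul_assoc s, hsu, one_mul, mul_add, ← mul_assoc]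
    have e2 : ((‖s‖^2 : ℝ) : ℍ[ℝ]) * (q ^ n * u ^ (n+1))
        = q ^ n * star s * u ^ n := by
      rw [← mul_assoc, Quaternion.coe_commutes, mul_assoc, hss,
        pow_succ' u n, mul_assoc (star s), ← mul_assoc s, hsu, one_mul, ← mul_assoc]
    rw [hPdef, add_mul, sub_mul, t1, e1, e2, hg]
    simp only
    abel
  have hps : ∀ N, ∑ n ∈ range N, P * (q ^ n * u ^ (n+1)) = g N - g 0 := by
    intro N
    simp only [key]
    exact Finset.sum_range_sub g N
  have hgz : Tendsto g atTop (𝓝 0) := by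
    have t1 : Tendsto (fun n : ℕ => q ^ (n+1) * u ^ n) atTop (𝓝 0) := by
      apply squeeze_zero_norm (a := fun n => ‖q‖ * (‖q‖ * ‖u‖) ^ n)
      · intro n
        rw [norm_mul, norm_pow, norm_pow, mul_pow, pow_succ]
        apply le_of_eq; ring
      · simpa using (tendsto_pow_atTop_nhds_zero_of_lt_one hr0 hr1).const_mul ‖q‖
    have t2 : Tendsto (fun n : ℕ => q ^ n * star s * u ^ n) atTop (𝓝 0) := by
      apply squeeze_zero_norm (a := fun n => ‖star s‖ * (‖q‖ * ‖u‖) ^ n)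
      · intro n
        rw [norm_mul, norm_mul, norm_pow, norm_pow, mul_pow]
        apply le_of_eq; ring
      · simpa using (tendsto_pow_atTop_nhds_zero_of_lt_one hr0 hr1).const_mul ‖star s‖
    simpa using t1.sub t2
  have hPT : HasSum (fun n : ℕ => P * (q ^ n * u ^ (n+1))) (P * T) := hsum.mul_left P
  have htend := hPT.tendsto_sum_nat
  have htend' : Tendsto (fun N => g N - g 0) atTop (𝓝 (P * T)) := htend.congr hps
  have htend2 : Tendsto (fun N => g N - g 0) atTop (𝓝 (0 - g 0)) :=
    hgz.sub tendsto_const_nhds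
  have hPTval : P * T = 0 - g 0 := tendsto_nhds_unique htend' htend2
  have hg0 : g 0 = q - star s := by simp [hg]
  have hfinal : -P⁻¹ * (q - star s) = T := by
    have e : T = P⁻¹ * (P * T) := by
      rw [← mul_assoc, inv_mul_cancel₀ hP, one_mul]
    rw [e, hPTval, hg0, zero_sub, mul_neg, ← neg_mul]
  rw [hfinal]
  exact hsum
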